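/- Any linear (n,k) code C ⊆ F_{q^N}^n with minimum rank distance d satisfies the Singleton-style bound Nk ≤ Nn − (d−1)·max(N,n). -/

import Mathlib

/-- Rank norm of a vector over the base field `K`. -/
noncomputable def rankNorm (K : Type*) {L : Type*} [Field K] [Field L] [Algebra K L]
    {n : ℕ} (x : Fin n → L) : ℕ :=
  Module.finrank K (Submodule.span K (Set.range x))

/-- Singleton-style bound for rank-metric codes:
`N·k ≤ N·n − (d−1)·max(N,n)`. -/
theorem rank_singleton_bound (K L : Type*) [Field K] [Fintype K] [Field L] [Fintype L]
    [Algebra K L] (n k d N : ℕ) (hN : Module.finrank K L = N)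
    (C : Submodule L (Fin n → L)) (hk : Module.finrank L C = k)
    (hd : IsLeast {r : ℕ | ∃ c ∈ C, c ≠ 0 ∧ rankNorm K c = r} d) :
    (N * k : ℤ) ≤ (N * n : ℤ) - (d - 1 : ℤ) * max N n := by
  classical
  have hFD : Module.Finite K L := Module.Finite.of_finite
  obtain ⟨⟨c₀, hc₀C, hc₀ne, hc₀r⟩, hlb⟩ := hd
  have hlow : ∀ c ∈ C, c ≠ (0 : Fin n → L) → d ≤ rankNorm K c :=
    fun c hc hne => hlb ⟨c, hc, hne, rfl⟩
  -- d ≥ 1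
  have hd1 : 1 ≤ d := by
    rcases Nat.eq_zero_or_pos d with h0 | h
    · exfalso
      rw [h0] at hc₀r
      have hbot : Submodule.span K (Set.range c₀) = ⊥ :=
        Submodule.finrank_eq_zero.mp hc₀r
      apply hc₀ne
      funext i
      have : c₀ i ∈ Submodule.span K (Set.range c₀) :=
        Submodule.subset_span ⟨i, rfl⟩
      rw [hbot] at this
      simpa using this
    · exact h
  -- d ≤ N
  have hdN : d ≤ N := by
    rw [← hc₀r, ← hN]
    exact Submodule.finrank_le _
  -- d ≤ n
  have hdn : d ≤ n := by
    rw [← hc₀r]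
    refine (finrank_span_le_card (R := K) (Set.range c₀)).trans ?_
    rw [Set.toFinset_card]
    simpa using Fintype.card_range_le c₀
  rcases le_total n N with hcase | hcase
  · -- n ≤ N : Hamming-style Singleton bound, k ≤ n - d + 1
    rw [max_eq_left hcase]
    obtain ⟨S, -, hScard⟩ := Finset.exists_subset_card_eq (s := (Finset.univ : Finset (Fin n))) (n := d - 1)
      (by simpa using (Nat.sub_le d 1).trans hdn)
    let f : C →ₗ[L] ({x // x ∈ Sᶜ} → L) :=
      (LinearMap.funLeft L L (fun i : {x // x ∈ Sᶜ} => (i : Fin n))).comp C.subtype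
    have hfinj : Function.Injective f := by
      rw [← LinearMap.ker_eq_bot, LinearMap.ker_eq_bot']
      intro x hfx
      by_contra hne
      have hxne : (x : Fin n → L) ≠ 0 := by
        simpa [Submodule.coe_eq_zero] using hne
      have hzero : ∀ i ∉ S, (x : Fin n → L) i = 0 := by
        intro i hi
        have := congrFun hfx ⟨i, Finset.mem_compl.mpr hi⟩
        simpa [f, LinearMap.funLeft] using this
      have hsub : Set.range (x : Fin n → L) ⊆
          insert (0 : L) ((x : Fin n → L) '' ↑S) := by
        rintro _ ⟨i, rfl⟩
        by_cases hi : i ∈ S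
        · exact Set.mem_insert_of_mem _ ⟨i, hi, rfl⟩
        · rw [hzero i hi]; exact Set.mem_insert _ _
      have hspan : Submodule.span K (Set.range (x : Fin n → L)) ≤
          Submodule.span K ((x : Fin n → L) '' ↑S) := by
        refine le_trans (Submodule.span_mono hsub) (le_of_eq ?_)
        exact Submodule.span_insert_zero
      have h1 : rankNorm K (x : Fin n → L) ≤
          Module.finrank K (Submodule.span K ((x : Fin n → L) '' ↑S)) :=
        Submodule.finrank_mono hspan
      have h2 : Module.finrank K (Submodule.span K ((x : Fin n → L) '' ↑S)) ≤
          (S.image (x : Fin n → L)).card := by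
        rw [← Finset.coe_image]
        exact finrank_span_finset_le_card _
      have h3 : (S.image (x : Fin n → L)).card ≤ S.card := Finset.card_image_le
      have h4 := hlow (x : Fin n → L) x.2 hxne
      omega
    have hle := LinearMap.finrank_le_finrank_of_injective hfinj
    rw [hk] at hle
    have hcard : Module.finrank L ({x // x ∈ Sᶜ} → L) = n - (d - 1) := by
      rw [Module.finrank_fintype_fun_eq_card]
      simp [Finset.card_compl, hScard]
    rw [hcard] at hle
    have hz : (k : ℤ) + d ≤ (n : ℤ) + 1 := by
      have : k + d ≤ n + 1 := by omega
      exact_mod_cast this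
    have hN0 : (0 : ℤ) ≤ N := Int.natCast_nonneg N
    nlinarith [mul_nonneg hN0 (show (0 : ℤ) ≤ (n : ℤ) + 1 - d - k by linarith)]
  · -- N ≤ n : transposed Singleton bound, N*k ≤ n*(N - d + 1)
    rw [max_eq_right hcase]
    -- a subspace W of L of dimension d - 1
    have hcastle : d - 1 ≤ Module.finrank K L := by omega
    let b := Module.finBasis K L
    let v : Fin (d - 1) → L := fun i => b (Fin.castLE hcastle i)
    have hvli : LinearIndependent K v :=
      b.linearIndependent.comp _ (Fin.castLE_injective hcastle)
    set W : Submodule K L := Submodule.span K (Set.range v) with hW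
    have hWrank : Module.finrank K W = d - 1 := by
      rw [finrank_span_eq_card hvli]
      simp
    have hQrank : Module.finrank K (L ⧸ W) = N - (d - 1) := by
      have := Submodule.finrank_quotient_add_finrank W
      omega
    let g : C →ₗ[K] (Fin n → L ⧸ W) :=
      (LinearMap.pi (fun i : Fin n => W.mkQ.comp (LinearMap.proj i))).comp
        (C.subtype.restrictScalars K)
    have hginj : Function.Injective g := by
      rw [← LinearMap.ker_eq_bot, LinearMap.ker_eq_bot']
      intro x hgx
      by_contra hne
      have hxne : (x : Fin n → L) ≠ 0 := by
        simpa [Submodule.coe_eq_zero] using hne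
      have hmem : ∀ i : Fin n, (x : Fin n → L) i ∈ W := by
        intro i
        have := congrFun hgx i
        simpa [g, Submodule.Quotient.mk_eq_zero] using this
      have hspan : Submodule.span K (Set.range (x : Fin n → L)) ≤ W := by
        rw [Submodule.span_le]
        rintro _ ⟨i, rfl⟩
        exact hmem i
      have h1 : rankNorm K (x : Fin n → L) ≤ d - 1 := by
        have := Submodule.finrank_mono hspan
        rw [hWrank] at this
        exact this
      have h4 := hlow (x : Fin n → L) x.2 hxne
      omega
    have hle := LinearMap.finrank_le_finrank_of_injective hginj
    have hCrank : Module.finrank K C = N * k := by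
      rw [← hN, ← hk]
      exact (Module.finrank_mul_finrank K L C).symm
    have htarget : Module.finrank K (Fin n → L ⧸ W) = n * (N - (d - 1)) := by
      rw [Module.finrank_pi_fintype, hQrank]
      simp [Finset.sum_const, mul_comm]
    rw [hCrank, htarget] at hle
    have hnat : N * k + n * (d - 1) ≤ n * N := by
      have : n * (N - (d - 1)) + n * (d - 1) = n * N := by
        rw [← Nat.mul_add]
        congr 1
        omega
      omega
    have hz : (N : ℤ) * k + (n : ℤ) * (d - 1) ≤ (n : ℤ) * N := by
      have := hnat
      push_cast [Nat.cast_sub hd1] at *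
      push_cast at this ⊢
      exact_mod_cast by
        have h' : ((N * k + n * (d - 1) : ℕ) : ℤ) ≤ ((n * N : ℕ) : ℤ) := by exact_mod_cast hnat
        push_cast [Nat.cast_sub hd1] at h'
        linarith
    linarith
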